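/- For every pair δ ≥ ω > 0 there exists a convex body K in ℝⁿ with diameter δ and thickness ω such that sup_{u≠±v} |w_K(u)−w_K(v)|/ρ(u,v) = √(δ²−ω²); i.e., the Lipschitz constant M_K is optimal within the class of bodies with given diameter and thickness. -/

import Mathlib

open scoped RealInnerProductSpace
open Metric Filter

/-- Width of `K` in direction `u`: distance between the two supporting
hyperplanes of `K` orthogonal to the unit vector `u`. -/
noncomputable def widthFn {n : ℕ} (K : Set (EuclideanSpace ℝ (Fin n)))
    (u : EuclideanSpace ℝ (Fin n)) : ℝ :=
  sSup ((fun x => ⟪x, u⟫) '' K) - sInf ((fun x => ⟪x, u⟫) '' K)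

/-- Diameter of `K` in direction `u`: maximal length of a chord of `K` parallel to `u`. -/
noncomputable def dirDiam {n : ℕ} (K : Set (EuclideanSpace ℝ (Fin n)))
    (u : EuclideanSpace ℝ (Fin n)) : ℝ :=
  sSup {d : ℝ | ∃ x ∈ K, ∃ y ∈ K, (∃ t : ℝ, x - y = t • u) ∧ d = dist x y}

/-- Projective spherical distance `ρ(u,v) = arccos |⟨u,v⟩|`. -/
noncomputable def rho {n : ℕ} (u v : EuclideanSpace ℝ (Fin n)) : ℝ :=
  Real.arccos |⟪u, v⟫|

/-- `e_K(O)`: maximal length of a chord of `K` cut by a line through `O`. -/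
noncomputable def eFn {n : ℕ} (K : Set (EuclideanSpace ℝ (Fin n)))
    (O : EuclideanSpace ℝ (Fin n)) : ℝ :=
  sSup {d : ℝ | ∃ x ∈ K, ∃ y ∈ K, Collinear ℝ ({O, x, y} : Set (EuclideanSpace ℝ (Fin n))) ∧
    d = dist x y}

/-- `s_K(u)`: maximal distance between a point of `K` in one supporting hyperplane
orthogonal to `u` and a point of `K` in the other. -/
noncomputable def sFn {n : ℕ} (K : Set (EuclideanSpace ℝ (Fin n)))
    (u : EuclideanSpace ℝ (Fin n)) : ℝ :=
  sSup {d : ℝ | ∃ A ∈ K, ∃ B ∈ K,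
    (∀ x ∈ K, ⟪x, u⟫ ≤ ⟪A, u⟫) ∧ (∀ x ∈ K, ⟪B, u⟫ ≤ ⟪x, u⟫) ∧ d = dist A B}

/-- `r_K(u)`: infimum over diametral chords `[AB]` for `u` and pairs of parallel
supporting hyperplanes `H₁ ∋ A`, `H₂ ∋ B` of the distance between `H₁` and `H₂`. -/
noncomputable def rFn {n : ℕ} (K : Set (EuclideanSpace ℝ (Fin n)))
    (u : EuclideanSpace ℝ (Fin n)) : ℝ :=
  sInf {d : ℝ | ∃ A ∈ K, ∃ B ∈ K, (∃ t : ℝ, A - B = t • u) ∧ dist A B = dirDiam K u ∧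
    ∃ v : EuclideanSpace ℝ (Fin n), ‖v‖ = 1 ∧
      (∀ x ∈ K, ⟪x, v⟫ ≤ ⟪A, v⟫) ∧ (∀ x ∈ K, ⟪B, v⟫ ≤ ⟪x, v⟫) ∧ d = ⟪A - B, v⟫}

namespace WidthOpt

open Real Topology

variable {n : ℕ} [NeZero n]

noncomputable def E0 (n : ℕ) [NeZero n] : EuclideanSpace ℝ (Fin n) :=
  EuclideanSpace.single (0 : Fin n) (1:ℝ)

lemma inner_E0 (x : EuclideanSpace ℝ (Fin n)) : ⟪x, E0 n⟫ = x 0 := by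
  rw [E0, EuclideanSpace.inner_single_right]; simp

lemma inner_E0' (x : EuclideanSpace ℝ (Fin n)) : ⟪E0 n, x⟫ = x 0 := by
  rw [real_inner_comm]; exact inner_E0 x

lemma norm_E0 : ‖E0 n‖ = 1 := by
  simp [E0, EuclideanSpace.norm_single]

lemma E0_apply_zero : (E0 n) 0 = 1 := by
  simp [E0, EuclideanSpace.single_apply]

noncomputable def Q (x : EuclideanSpace ℝ (Fin n)) : EuclideanSpace ℝ (Fin n) :=
  x - x 0 • E0 n

lemma Q_apply_zero (x : EuclideanSpace ℝ (Fin n)) : (Q x) 0 = 0 := by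
  simp [Q, E0, EuclideanSpace.single_apply]

lemma inner_Q (x u : EuclideanSpace ℝ (Fin n)) :
    ⟪Q x, Q u⟫ = ⟪x, u⟫ - x 0 * u 0 := by
  simp only [Q, inner_sub_left, inner_sub_right, real_inner_smul_left, real_inner_smul_right,
    inner_E0, inner_E0', real_inner_self_eq_norm_sq]
  have : ‖E0 n‖ = 1 := norm_E0
  rw [this]; ring

lemma normQ_sq (x : EuclideanSpace ℝ (Fin n)) : ‖Q x‖ ^ 2 = ‖x‖ ^ 2 - (x 0) ^ 2 := by
  have h := inner_Q x x
  rw [real_inner_self_eq_norm_sq, real_inner_self_eq_norm_sq] at h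
  rw [h]; ring

lemma inner_Q_self (u : EuclideanSpace ℝ (Fin n)) : ⟪Q u, u⟫ = ‖Q u‖ ^ 2 := by
  have h2 : ⟪Q u, u 0 • E0 n⟫ = u 0 * (Q u) 0 := by
    rw [real_inner_smul_right, real_inner_comm, inner_E0']
  have h3 : ⟪Q u, u⟫ = ⟪Q u, Q u⟫ + ⟪Q u, u 0 • E0 n⟫ := by
    rw [← inner_add_right]; congr 1; simp [Q]
  rw [h3, h2, Q_apply_zero, real_inner_self_eq_norm_sq]; ring

lemma inner_le_abs_mul (x u : EuclideanSpace ℝ (Fin n)) :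
    ⟪x, u⟫ ≤ |x 0| * |u 0| + ‖Q x‖ * ‖Q u‖ := by
  have h : ⟪x, u⟫ = x 0 * u 0 + ⟪Q x, Q u⟫ := by rw [inner_Q]; ring
  have h2 : ⟪Q x, Q u⟫ ≤ ‖Q x‖ * ‖Q u‖ := real_inner_le_norm _ _
  have h3 : x 0 * u 0 ≤ |x 0| * |u 0| := by
    rw [← abs_mul]; exact le_abs_self _
  linarith

lemma aux2d (a b c d t s : ℝ) (hb : 0 ≤ b) (hd : 0 ≤ d) (ht : 0 ≤ t)
    (hs : 0 ≤ s) (hac : a ≤ c) (habcd : a^2 + b^2 ≤ c^2 + d^2) (htd : s*c ≤ t*d) :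
    a*t + b*s ≤ c*t + d*s := by
  rcases le_or_gt b d with h | h
  · nlinarith
  · have hb0 : 0 < b := lt_of_le_of_lt hd h
    have key1 : s*(c+a) ≤ t*(b+d) := by nlinarith
    have key2 : s*(b-d)*(b+d) ≤ t*(c-a)*(b+d) := by nlinarith
    have hbd : 0 < b + d := by linarith
    nlinarith

lemma arccos_anti {x y : ℝ} (h : x ≤ y) : Real.arccos y ≤ Real.arccos x := by
  rw [Real.arccos_eq_pi_div_two_sub_arcsin, Real.arccos_eq_pi_div_two_sub_arcsin]
  linarith [Real.monotone_arcsin h]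

section Body

variable (δ ω : ℝ)

def slab (n : ℕ) [NeZero n] (δ ω : ℝ) : Set (EuclideanSpace ℝ (Fin n)) :=
  {x | ‖x‖ ≤ δ/2 ∧ |x 0| ≤ ω/2}

variable {δ ω}
variable (hω : 0 < ω) (hδ : ω ≤ δ)

include hω hδ

lemma hδ0 : 0 < δ := lt_of_lt_of_le hω hδ

lemma ratio_mem : ω/δ ≤ 1 := by
  rw [div_le_one (hδ0 hω hδ)]; exact hδ

lemma ratio_pos : 0 < ω/δ := div_pos hω (hδ0 hω hδ)

lemma cos_phi0 : Real.cos (Real.arccos (ω/δ)) = ω/δ :=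
  Real.cos_arccos (by linarith [ratio_pos hω hδ]) (ratio_mem hω hδ)

lemma D_sq : (Real.sqrt (δ^2 - ω^2))^2 = δ^2 - ω^2 :=
  Real.sq_sqrt (by nlinarith)

lemma sin_phi0 : Real.sin (Real.arccos (ω/δ)) = Real.sqrt (δ^2 - ω^2) / δ := by
  rw [Real.sin_arccos]
  have hδ0 : (0:ℝ) < δ := lt_of_lt_of_le hω hδ
  have h1 : 1 - (ω/δ)^2 = (δ^2 - ω^2) / δ^2 := by field_simp
  rw [h1, Real.sqrt_div (by nlinarith), Real.sqrt_sq hδ0.le]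

set_option maxHeartbeats 2000000 in
lemma isGreatest_inner (u : EuclideanSpace ℝ (Fin n)) (hu : ‖u‖ = 1) :
    IsGreatest ((fun x => ⟪x, u⟫) '' slab n δ ω)
      (δ/2 * Real.cos (Real.arccos (ω/δ) - min (Real.arccos |u 0|) (Real.arccos (ω/δ)))) := by
  have hδ0 : (0:ℝ) < δ := lt_of_lt_of_le hω hδ
  set D := Real.sqrt (δ^2 - ω^2) with hD
  have hD0 : 0 ≤ D := Real.sqrt_nonneg _
  have hDsq : D^2 = δ^2 - ω^2 := D_sq hω hδ
  set t := |u 0| with htdef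
  set s := ‖Q u‖ with hsdef
  have ht0 : 0 ≤ t := abs_nonneg _
  have hs0 : 0 ≤ s := norm_nonneg _
  have ht1 : t ≤ 1 := by
    have := abs_real_inner_le_norm u (E0 n)
    rw [inner_E0, hu, norm_E0 (n := n)] at this; simpa using this
  have hs2 : s^2 = 1 - t^2 := by
    rw [hsdef, normQ_sq, hu, htdef, sq_abs]; norm_num
  have hcos_t : Real.cos (Real.arccos t) = t := Real.cos_arccos (by linarith) ht1
  have hsin_t : Real.sin (Real.arccos t) = s := by
    rw [Real.sin_arccos, ← hs2, Real.sqrt_sq hs0]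
  rcases le_or_gt t (ω/δ) with hcase | hcase
  · -- case A: width = δ
    have hmin : min (Real.arccos t) (Real.arccos (ω/δ)) = Real.arccos (ω/δ) :=
      min_eq_right (arccos_anti hcase)
    rw [hmin, sub_self, Real.cos_zero, mul_one]
    constructor
    · refine ⟨(δ/2) • u, ⟨?_, ?_⟩, ?_⟩
      · rw [norm_smul, hu, mul_one, Real.norm_eq_abs, abs_of_pos (by linarith : (0:ℝ) < δ/2)]
      · have : ((δ/2) • u) 0 = (δ/2) * u 0 := rfl
        rw [this, abs_mul, abs_of_pos (by linarith : (0:ℝ) < δ/2)]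
        calc δ/2 * |u 0| ≤ δ/2 * (ω/δ) := by
              apply mul_le_mul_of_nonneg_left hcase (by linarith)
          _ = ω/2 := by field_simp
      · simp only [real_inner_smul_left, real_inner_self_eq_norm_sq, hu]; norm_num
    · rintro y ⟨x, ⟨hx1, hx2⟩, rfl⟩
      have hb := inner_le_abs_mul x u
      set a := |x 0| with hadef
      set b := ‖Q x‖ with hbdef
      have ha0 : 0 ≤ a := abs_nonneg _
      have hb0 : 0 ≤ b := norm_nonneg _
      have hab : a^2 + b^2 ≤ (δ/2)^2 := by
        have := normQ_sq x
        have hx1' : ‖x‖^2 ≤ (δ/2)^2 := by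
          apply pow_le_pow_left₀ (norm_nonneg _) hx1
        rw [hbdef] at *
        nlinarith [sq_abs (x 0)]
      have : a * t + b * s ≤ δ/2 := by
        nlinarith [sq_nonneg (a*s - b*t), sq_nonneg (a*t + b*s)]
      calc ⟪x, u⟫ ≤ a * t + b * s := hb
        _ ≤ δ/2 := this
  · -- case B
    have harc : Real.arccos t ≤ Real.arccos (ω/δ) := arccos_anti hcase.le
    have hmin : min (Real.arccos t) (Real.arccos (ω/δ)) = Real.arccos t := min_eq_left harc
    have hval : δ/2 * Real.cos (Real.arccos (ω/δ) - Real.arccos t) = (ω*t + D*s)/2 := by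
      rw [Real.cos_sub, cos_phi0 hω hδ, sin_phi0 hω hδ, hcos_t, hsin_t]
      field_simp; ring
    rw [hmin, hval]
    have hsω_tD : s * ω ≤ t * D := by
      have h1 : (s*ω)^2 ≤ (t*D)^2 := by
        have : (ω/δ)^2 ≤ t^2 := by
          apply pow_le_pow_left₀ (le_of_lt (div_pos hω hδ0)) hcase.le
        have hωδ : ω^2 ≤ t^2 * δ^2 := by
          have := mul_le_mul_of_nonneg_right this (le_of_lt (mul_pos hδ0 hδ0))
          calc ω^2 = (ω/δ)^2 * (δ*δ) := by field_simp
            _ ≤ t^2 * (δ*δ) := this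
            _ = t^2 * δ^2 := by ring
        nlinarith
      nlinarith [mul_nonneg hs0 hω.le, mul_nonneg ht0 hD0]
    constructor
    · -- membership
      set sg : ℝ := if 0 ≤ u 0 then (1:ℝ) else -1 with hsg
      set c : ℝ := if s = 0 then 0 else D/(2*s) with hc
      have hsg_abs : |sg| = 1 := by
        rw [hsg]; split <;> simp
      have hsgu : sg * u 0 = t := by
        rw [hsg, htdef]; split
        · simp [abs_of_nonneg ‹_›]
        · push_neg at *; rw [abs_of_neg (by linarith)]; ring
      have hcs2 : c * s^2 = D * s / 2 := by
        rw [hc]; split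
        · simp [‹s = 0›]
        · field_simp
      have hc2s2 : c^2 * s^2 ≤ D^2/4 := by
        rw [hc]; split
        · simp [‹s = 0›]; positivity
        · have hsne : s ≠ 0 := ‹_›
          have : (D/(2*s))^2 * s^2 = D^2/4 := by field_simp; ring
          rw [this]
      refine ⟨(ω/2 * sg) • E0 n + c • Q u, ⟨?_, ?_⟩, ?_⟩
      · -- norm bound
        have hortho : ⟪(ω/2 * sg) • E0 n, c • Q u⟫ = 0 := by
          rw [real_inner_smul_left, real_inner_smul_right, inner_E0', Q_apply_zero]
          ring
        have hnorm2 : ‖(ω/2 * sg) • E0 n + c • Q u‖^2 = (ω/2)^2 + c^2 * s^2 := by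
          rw [norm_add_sq_real, hortho, norm_smul, norm_smul, norm_E0 (n := n)]
          rw [Real.norm_eq_abs, Real.norm_eq_abs, abs_mul, hsg_abs]
          rw [abs_of_pos (by linarith : (0:ℝ) < ω/2)]
          rw [← hsdef, mul_pow (|c|) s, sq_abs]
          ring
        have : ‖(ω/2 * sg) • E0 n + c • Q u‖^2 ≤ (δ/2)^2 := by
          rw [hnorm2]; nlinarith
        nlinarith [norm_nonneg ((ω/2 * sg) • E0 n + c • Q u)]
      · -- slab bound
        have happ : ((ω/2 * sg) • E0 n + c • Q u) 0 = ω/2 * sg := by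
          have h1 : ((ω/2 * sg) • E0 n + c • Q u) 0 = (ω/2 * sg) * (E0 n 0) + c * (Q u 0) := rfl
          rw [h1, E0_apply_zero, Q_apply_zero]; ring
        rw [happ, abs_mul, hsg_abs, abs_of_pos (by linarith : (0:ℝ) < ω/2)]
        simp
      · -- inner value
        show ⟪(ω/2 * sg) • E0 n + c • Q u, u⟫ = (ω*t + D*s)/2
        rw [inner_add_left, real_inner_smul_left, real_inner_smul_left, inner_E0',
          inner_Q_self, ← hsdef]
        rw [mul_assoc]
        rw [show ω/2 * (sg * u 0) = ω/2 * t from by rw [hsgu]]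
        rw [hcs2]; ring
    · rintro y ⟨x, ⟨hx1, hx2⟩, rfl⟩
      have hb := inner_le_abs_mul x u
      have hab : |x 0|^2 + ‖Q x‖^2 ≤ (ω/2)^2 + (D/2)^2 := by
        have h1 := normQ_sq x
        have hx1' : ‖x‖^2 ≤ (δ/2)^2 := pow_le_pow_left₀ (norm_nonneg _) hx1 2
        have : (ω/2)^2 + (D/2)^2 = (δ/2)^2 := by nlinarith
        rw [this]
        nlinarith [sq_abs (x 0)]
      have := aux2d (|x 0|) (‖Q x‖) (ω/2) (D/2) t s (norm_nonneg _) (by linarith) ht0 hs0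
        hx2 hab (by linarith)
      calc ⟪x, u⟫ ≤ |x 0| * t + ‖Q x‖ * s := hb
        _ ≤ ω/2 * t + D/2 * s := this
        _ = (ω*t + D*s)/2 := by ring

lemma neg_mem_slab {x : EuclideanSpace ℝ (Fin n)} (hx : x ∈ slab n δ ω) :
    -x ∈ slab n δ ω := by
  obtain ⟨h1, h2⟩ := hx
  refine ⟨by rwa [norm_neg], ?_⟩
  have : (-x) 0 = -(x 0) := rfl
  rw [this, abs_neg]; exact h2

lemma width_eq (u : EuclideanSpace ℝ (Fin n)) (hu : ‖u‖ = 1) :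
    widthFn (slab n δ ω) u =
      δ * Real.cos (Real.arccos (ω/δ) - min (Real.arccos |u 0|) (Real.arccos (ω/δ))) := by
  have hg := isGreatest_inner hω hδ u hu
  set m := δ/2 * Real.cos (Real.arccos (ω/δ) - min (Real.arccos |u 0|) (Real.arccos (ω/δ))) with hm
  have hl : IsLeast ((fun x => ⟪x, u⟫) '' slab n δ ω) (-m) := by
    constructor
    · obtain ⟨x, hx, hxm⟩ := hg.1
      have hxm' : ⟪x, u⟫ = m := hxm
      refine ⟨-x, neg_mem_slab hω hδ hx, ?_⟩
      show ⟪-x, u⟫ = -m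
      rw [inner_neg_left, hxm']
    · rintro y ⟨x, hx, rfl⟩
      have h2 : ⟪-x, u⟫ ≤ m := hg.2 ⟨-x, neg_mem_slab hω hδ hx, rfl⟩
      rw [inner_neg_left] at h2
      show -m ≤ ⟪x, u⟫
      linarith
  rw [widthFn, hg.csSup_eq, hl.csInf_eq]
  rw [hm]; ring

lemma phi0_le_pi_div_two : Real.arccos (ω/δ) ≤ π/2 :=
  Real.arccos_le_pi_div_two.2 (le_of_lt (ratio_pos hω hδ))

lemma width_ge (u : EuclideanSpace ℝ (Fin n)) (hu : ‖u‖ = 1) :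
    ω ≤ widthFn (slab n δ ω) u := by
  rw [width_eq hω hδ u hu]
  set θ := Real.arccos (ω/δ) - min (Real.arccos |u 0|) (Real.arccos (ω/δ)) with hθ
  have h1 : 0 ≤ θ := sub_nonneg.2 (min_le_right _ _)
  have h2 : θ ≤ Real.arccos (ω/δ) :=
    sub_le_self _ (le_min (Real.arccos_nonneg _) (Real.arccos_nonneg _))
  have h3 : Real.arccos (ω/δ) ≤ π := Real.arccos_le_pi _
  have h4 : Real.cos (Real.arccos (ω/δ)) ≤ Real.cos θ :=
    Real.cos_le_cos_of_nonneg_of_le_pi h1 h3 h2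
  have h5 := cos_phi0 hω hδ
  have hδ0 : (0:ℝ) < δ := lt_of_lt_of_le hω hδ
  calc ω = δ * (ω/δ) := by field_simp
    _ = δ * Real.cos (Real.arccos (ω/δ)) := by rw [h5]
    _ ≤ δ * Real.cos θ := by apply mul_le_mul_of_nonneg_left h4 hδ0.le

lemma width_E0 : widthFn (slab n δ ω) (E0 n) = ω := by
  rw [width_eq hω hδ (E0 n) (norm_E0 (n := n)), E0_apply_zero]
  have h1 : Real.arccos |(1:ℝ)| = 0 := by rw [abs_one, Real.arccos_one]
  rw [h1, min_eq_left (Real.arccos_nonneg _), sub_zero, cos_phi0 hω hδ]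
  have hδ0 : (0:ℝ) < δ := lt_of_lt_of_le hω hδ
  field_simp

omit hω hδ in
lemma min_lip (a b c : ℝ) : |min a c - min b c| ≤ |a - b| := by
  rcases le_total a c with h1 | h1 <;> rcases le_total b c with h2 | h2 <;>
    rw [abs_le] <;> constructor <;>
    simp [min_eq_left, min_eq_right, h1, h2] <;>
    cases abs_cases (a - b) <;> linarith

lemma G_lip_one {a b : ℝ} (hba : b ≤ a) (hb : 0 ≤ b) (ha : a ≤ Real.arccos (ω/δ)) :
    0 ≤ δ * Real.cos (Real.arccos (ω/δ) - a) - δ * Real.cos (Real.arccos (ω/δ) - b) ∧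
    δ * Real.cos (Real.arccos (ω/δ) - a) - δ * Real.cos (Real.arccos (ω/δ) - b) ≤
      Real.sqrt (δ^2 - ω^2) * (a - b) := by
  have hδ0 : (0:ℝ) < δ := lt_of_lt_of_le hω hδ
  set φ := Real.arccos (ω/δ) with hφ
  have hφ2 : φ ≤ π/2 := phi0_le_pi_div_two hω hδ
  have hφ0 : 0 ≤ φ := Real.arccos_nonneg _
  set A := φ - b with hA
  set B := φ - a with hB
  have hBA : B ≤ A := by simp [hA, hB]; linarith
  have hB0 : 0 ≤ B := by simp [hB]; linarith
  have hAφ : A ≤ φ := by simp [hA]; linarith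
  have hcos : Real.cos A ≤ Real.cos B :=
    Real.cos_le_cos_of_nonneg_of_le_pi hB0 (by linarith [Real.pi_pos]) hBA
  constructor
  · have : δ * Real.cos A ≤ δ * Real.cos B := mul_le_mul_of_nonneg_left hcos hδ0.le
    linarith
  · have hkey : Real.cos B - Real.cos A ≤ Real.sin φ * (A - B) := by
      have hid : Real.cos B - Real.cos A =
          2 * Real.sin ((A + B)/2) * Real.sin ((A - B)/2) := by
        rw [Real.cos_sub_cos, show (B - A)/2 = -((A - B)/2) by ring, Real.sin_neg]
        ring
      rw [hid]
      have hs1 : Real.sin ((A + B)/2) ≤ Real.sin φ := by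
        apply Real.sin_le_sin_of_le_of_le_pi_div_two (by linarith) hφ2
        linarith
      have hs1' : 0 ≤ Real.sin ((A + B)/2) :=
        Real.sin_nonneg_of_nonneg_of_le_pi (by linarith) (by linarith [Real.pi_pos])
      have hs2 : Real.sin ((A - B)/2) ≤ (A - B)/2 := Real.sin_le (by linarith)
      have hs2' : 0 ≤ Real.sin ((A - B)/2) :=
        Real.sin_nonneg_of_nonneg_of_le_pi (by linarith) (by linarith [Real.pi_pos])
      have hsφ : 0 ≤ Real.sin φ :=
        Real.sin_nonneg_of_nonneg_of_le_pi hφ0 (by linarith [Real.pi_pos])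
      calc 2 * Real.sin ((A + B)/2) * Real.sin ((A - B)/2)
          ≤ 2 * Real.sin φ * ((A - B)/2) := by
            apply mul_le_mul (by linarith) hs2 hs2'
            positivity
        _ = Real.sin φ * (A - B) := by ring
    have hsinφ : Real.sin φ = Real.sqrt (δ^2 - ω^2) / δ := sin_phi0 hω hδ
    have : δ * (Real.cos B - Real.cos A) ≤ δ * (Real.sin φ * (A - B)) :=
      mul_le_mul_of_nonneg_left hkey hδ0.le
    have heq : δ * (Real.sin φ * (A - B)) = Real.sqrt (δ^2 - ω^2) * (a - b) := by
      rw [hsinφ, hA, hB]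
      field_simp
      ring
    linarith

lemma G_lip {a b : ℝ} (ha : 0 ≤ a) (hb : 0 ≤ b) :
    |δ * Real.cos (Real.arccos (ω/δ) - min a (Real.arccos (ω/δ))) -
      δ * Real.cos (Real.arccos (ω/δ) - min b (Real.arccos (ω/δ)))| ≤
      Real.sqrt (δ^2 - ω^2) * |a - b| := by
  set φ := Real.arccos (ω/δ) with hφ
  have hφ0 : 0 ≤ φ := Real.arccos_nonneg _
  have hD0 : 0 ≤ Real.sqrt (δ^2 - ω^2) := Real.sqrt_nonneg _
  have hmab := min_lip a b φ
  rcases le_total (min b φ) (min a φ) with h | h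
  · obtain ⟨h1, h2⟩ := G_lip_one hω hδ h (le_min hb hφ0) (min_le_right a φ)
    rw [abs_of_nonneg h1]
    calc _ ≤ Real.sqrt (δ^2 - ω^2) * (min a φ - min b φ) := h2
      _ = Real.sqrt (δ^2 - ω^2) * |min a φ - min b φ| := by
          rw [abs_of_nonneg (by linarith)]
      _ ≤ Real.sqrt (δ^2 - ω^2) * |a - b| := mul_le_mul_of_nonneg_left hmab hD0
  · obtain ⟨h1, h2⟩ := G_lip_one hω hδ h (le_min ha hφ0) (min_le_right b φ)
    rw [abs_sub_comm, abs_of_nonneg h1]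
    calc _ ≤ Real.sqrt (δ^2 - ω^2) * (min b φ - min a φ) := h2
      _ = Real.sqrt (δ^2 - ω^2) * |min a φ - min b φ| := by
          rw [abs_sub_comm, abs_of_nonneg (by linarith)]
      _ ≤ Real.sqrt (δ^2 - ω^2) * |a - b| := mul_le_mul_of_nonneg_left hmab hD0

omit hω hδ in
lemma key_coord_ineq {u v : EuclideanSpace ℝ (Fin n)} (hu : ‖u‖ = 1) (hv : ‖v‖ = 1) :
    |⟪u,v⟫| * |v 0| - Real.sqrt (1 - ⟪u,v⟫^2) * Real.sqrt (1 - (v 0)^2) ≤ |u 0| := by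
  set c := ⟪u,v⟫ with hc
  have hCS : |u 0 - c * v 0| ≤ Real.sqrt (1 - c^2) * Real.sqrt (1 - (v 0)^2) := by
    set w1 := u - c • v with hw1
    set w2 := E0 n - v 0 • v with hw2
    have hvv : ⟪v, v⟫ = 1 := by rw [real_inner_self_eq_norm_sq, hv]; norm_num
    have hi : ⟪w1, w2⟫ = u 0 - c * v 0 := by
      rw [hw1, hw2]
      simp only [inner_sub_left, inner_sub_right, real_inner_smul_left, real_inner_smul_right,
        inner_E0, inner_E0', hvv]
      rw [← hc]
      ring
    have hn1 : ‖w1‖^2 = 1 - c^2 := by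
      rw [hw1, norm_sub_sq_real, real_inner_smul_right, norm_smul, hu, hv]
      rw [Real.norm_eq_abs, mul_pow, sq_abs]
      rw [← hc]; ring
    have hn2 : ‖w2‖^2 = 1 - (v 0)^2 := by
      rw [hw2, norm_sub_sq_real, real_inner_smul_right, norm_smul, norm_E0 (n := n), hv]
      rw [Real.norm_eq_abs, mul_pow, sq_abs, inner_E0']
      ring
    have h1 : ‖w1‖ = Real.sqrt (1 - c^2) := by
      rw [← hn1, Real.sqrt_sq (norm_nonneg _)]
    have h2 : ‖w2‖ = Real.sqrt (1 - (v 0)^2) := by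
      rw [← hn2, Real.sqrt_sq (norm_nonneg _)]
    calc |u 0 - c * v 0| = |⟪w1, w2⟫| := by rw [hi]
      _ ≤ ‖w1‖ * ‖w2‖ := abs_real_inner_le_norm _ _
      _ = _ := by rw [h1, h2]
  have htri : |c * v 0| - |u 0 - c * v 0| ≤ |u 0| := by
    have := abs_sub_abs_le_abs_sub (c * v 0) (c * v 0 - u 0)
    simp only [sub_sub_cancel] at this
    rw [abs_sub_comm] at this
    linarith
  rw [abs_mul] at htri
  linarith

omit hω hδ in
lemma arccos_tri {u v : EuclideanSpace ℝ (Fin n)} (hu : ‖u‖ = 1) (hv : ‖v‖ = 1) :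
    Real.arccos |u 0| ≤ Real.arccos |⟪u,v⟫| + Real.arccos |v 0| := by
  set c := ⟪u,v⟫ with hc
  set X := Real.arccos |c| + Real.arccos |v 0| with hX
  rcases le_total (π/2) X with hX2 | hX2
  · calc Real.arccos |u 0| ≤ π/2 := Real.arccos_le_pi_div_two.2 (abs_nonneg _)
      _ ≤ X := hX2
  · have hc1 : |c| ≤ 1 := by
      have := abs_real_inner_le_norm u v
      rwa [hu, hv, mul_one] at this
    have hv1 : |v 0| ≤ 1 := by
      have := abs_real_inner_le_norm v (E0 n)
      rwa [inner_E0, hv, norm_E0 (n := n), mul_one] at this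
    have hX0 : 0 ≤ X := by
      have := Real.arccos_nonneg |c|
      have := Real.arccos_nonneg |v 0|
      linarith
    have hcosX : Real.cos X = |c| * |v 0| -
        Real.sqrt (1 - c^2) * Real.sqrt (1 - (v 0)^2) := by
      rw [hX, Real.cos_add, Real.cos_arccos (by linarith [abs_nonneg c]) hc1,
        Real.cos_arccos (by linarith [abs_nonneg (v 0)]) hv1,
        Real.sin_arccos, Real.sin_arccos, sq_abs, sq_abs]
    have hkey : Real.cos X ≤ |u 0| := by
      rw [hcosX]; exact key_coord_ineq hu hv
    calc Real.arccos |u 0| ≤ Real.arccos (Real.cos X) := arccos_anti hkey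
      _ = X := Real.arccos_cos hX0 (by linarith [Real.pi_pos])

omit hω hδ in
lemma abs_arccos_sub {u v : EuclideanSpace ℝ (Fin n)} (hu : ‖u‖ = 1) (hv : ‖v‖ = 1) :
    abs (Real.arccos |u 0| - Real.arccos |v 0|) ≤ Real.arccos |⟪u,v⟫| := by
  rw [abs_le]
  constructor
  · have h := arccos_tri hv hu
    rw [show ⟪v,u⟫ = ⟪u,v⟫ from real_inner_comm u v] at h
    linarith
  · have h := arccos_tri hu hv
    linarith

omit hω hδ in
lemma abs_inner_lt_one {u v : EuclideanSpace ℝ (Fin n)} (hu : ‖u‖ = 1) (hv : ‖v‖ = 1)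
    (huv : u ≠ v) (huv' : u ≠ -v) : |⟪u,v⟫| < 1 := by
  have hc1 : |⟪u,v⟫| ≤ 1 := by
    have := abs_real_inner_le_norm u v
    rwa [hu, hv, mul_one] at this
  rcases lt_or_eq_of_le hc1 with h | h
  · exact h
  · exfalso
    rcases (abs_eq (by norm_num : (0:ℝ) ≤ 1)).mp h with h1 | h1
    · exact huv ((inner_eq_one_iff_of_norm_eq_one (𝕜 := ℝ) hu hv).1 h1)
    · apply huv'
      have hnv : ‖-v‖ = 1 := by rwa [norm_neg]
      apply (inner_eq_one_iff_of_norm_eq_one (𝕜 := ℝ) hu hnv).1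
      rw [inner_neg_right, h1]; norm_num

omit hω hδ in
lemma abs_coord_le (x : EuclideanSpace ℝ (Fin n)) : |x 0| ≤ ‖x‖ := by
  have := abs_real_inner_le_norm x (E0 n)
  rwa [inner_E0, norm_E0 (n := n), mul_one] at this

lemma slab_subset_ball : slab n δ ω ⊆ Metric.closedBall 0 (δ/2) := by
  intro x hx
  rw [Metric.mem_closedBall, dist_zero_right]
  exact hx.1

lemma isCompact_slab : IsCompact (slab n δ ω) := by
  have hcont : Continuous (fun x : EuclideanSpace ℝ (Fin n) => x 0) :=
    (EuclideanSpace.proj (𝕜 := ℝ) (0 : Fin n)).continuous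
  have hclosed : IsClosed (slab n δ ω) := by
    apply IsClosed.inter
    · exact isClosed_le continuous_norm continuous_const
    · exact isClosed_le (continuous_abs.comp hcont) continuous_const
  exact (isCompact_closedBall (0 : EuclideanSpace ℝ (Fin n)) (δ/2)).of_isClosed_subset
    hclosed (slab_subset_ball hω hδ)

omit hω hδ in
lemma convex_slab : Convex ℝ (slab n δ ω) := by
  intro x hx y hy a b ha hb hab
  constructor
  · calc ‖a•x + b•y‖ ≤ ‖a•x‖ + ‖b•y‖ := norm_add_le _ _
      _ = a*‖x‖ + b*‖y‖ := by
          rw [norm_smul, norm_smul, Real.norm_eq_abs, Real.norm_eq_abs,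
            abs_of_nonneg ha, abs_of_nonneg hb]
      _ ≤ a*(δ/2) + b*(δ/2) := by
          apply add_le_add (mul_le_mul_of_nonneg_left hx.1 ha)
            (mul_le_mul_of_nonneg_left hy.1 hb)
      _ = δ/2 := by rw [← add_mul, hab, one_mul]
  · have happ : (a•x + b•y) 0 = a * x 0 + b * y 0 := rfl
    show |(a•x + b•y) 0| ≤ ω/2
    rw [happ]
    calc |a * x 0 + b * y 0| ≤ |a * x 0| + |b * y 0| := abs_add_le _ _
      _ = a*|x 0| + b*|y 0| := by
          rw [abs_mul, abs_mul, abs_of_nonneg ha, abs_of_nonneg hb]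
      _ ≤ a*(ω/2) + b*(ω/2) := by
          apply add_le_add (mul_le_mul_of_nonneg_left hx.2 ha)
            (mul_le_mul_of_nonneg_left hy.2 hb)
      _ = ω/2 := by rw [← add_mul, hab, one_mul]

lemma zero_mem_interior : (0 : EuclideanSpace ℝ (Fin n)) ∈ interior (slab n δ ω) := by
  rw [mem_interior]
  refine ⟨Metric.ball 0 (ω/2), ?_, Metric.isOpen_ball, Metric.mem_ball_self (by linarith)⟩
  intro x hx
  rw [Metric.mem_ball, dist_zero_right] at hx
  exact ⟨by linarith, le_of_lt (lt_of_le_of_lt (abs_coord_le x) hx)⟩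

lemma diam_slab (hn : 2 ≤ n) : Metric.diam (slab n δ ω) = δ := by
  have hδ0 : (0:ℝ) < δ := lt_of_lt_of_le hω hδ
  set i1 : Fin n := ⟨1, by omega⟩ with hi1
  set A : EuclideanSpace ℝ (Fin n) := (δ/2) • EuclideanSpace.single i1 (1:ℝ) with hA
  have hA0 : A 0 = 0 := by
    have : A 0 = (δ/2) * (EuclideanSpace.single i1 (1:ℝ)) 0 := rfl
    rw [this, EuclideanSpace.single_apply]
    have : (0 : Fin n) ≠ i1 := by
      intro h
      have := congrArg Fin.val h
      simp [hi1] at this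
    simp [this]
  have hAnorm : ‖A‖ = δ/2 := by
    rw [hA, norm_smul, EuclideanSpace.norm_single, Real.norm_eq_abs, norm_one,
      abs_of_pos (by linarith : (0:ℝ) < δ/2)]
    ring
  have hAmem : A ∈ slab n δ ω := ⟨le_of_eq hAnorm, by rw [hA0]; simp; linarith⟩
  have hnegA : -A ∈ slab n δ ω := neg_mem_slab hω hδ hAmem
  apply le_antisymm
  · apply Metric.diam_le_of_forall_dist_le hδ0.le
    intro x hx y hy
    calc dist x y = ‖x - y‖ := dist_eq_norm x y
      _ ≤ ‖x‖ + ‖y‖ := norm_sub_le _ _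
      _ ≤ δ/2 + δ/2 := add_le_add hx.1 hy.1
      _ = δ := by ring
  · have hdist : dist A (-A) = δ := by
      rw [dist_eq_norm, sub_neg_eq_add, ← two_smul ℝ A, norm_smul, hAnorm]
      simp; ring
    calc δ = dist A (-A) := hdist.symm
      _ ≤ Metric.diam (slab n δ ω) :=
        Metric.dist_le_diam_of_mem (isCompact_slab hω hδ).isBounded hAmem hnegA

lemma iInf_width :
    (⨅ u : sphere (0 : EuclideanSpace ℝ (Fin n)) 1, widthFn (slab n δ ω) u) = ω := by
  have hE0 : (E0 n) ∈ sphere (0 : EuclideanSpace ℝ (Fin n)) 1 := by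
    rw [mem_sphere_zero_iff_norm]; exact norm_E0
  haveI : Nonempty (sphere (0 : EuclideanSpace ℝ (Fin n)) 1) := ⟨⟨E0 n, hE0⟩⟩
  have hlb : ∀ u : sphere (0 : EuclideanSpace ℝ (Fin n)) 1, ω ≤ widthFn (slab n δ ω) u :=
    fun u => width_ge hω hδ u.1 (mem_sphere_zero_iff_norm.1 u.2)
  apply le_antisymm
  · have hbdd : BddBelow (Set.range fun u : sphere (0 : EuclideanSpace ℝ (Fin n)) 1 =>
        widthFn (slab n δ ω) u) := ⟨ω, by rintro _ ⟨u, rfl⟩; exact hlb u⟩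
    have := ciInf_le hbdd (⟨E0 n, hE0⟩ : sphere (0 : EuclideanSpace ℝ (Fin n)) 1)
    rwa [width_E0 hω hδ] at this
  · exact le_ciInf hlb

lemma ratio_le {u v : EuclideanSpace ℝ (Fin n)} (hu : ‖u‖ = 1) (hv : ‖v‖ = 1)
    (h1 : u ≠ v) (h2 : u ≠ -v) :
    |widthFn (slab n δ ω) u - widthFn (slab n δ ω) v| / Real.arccos |⟪u,v⟫| ≤
      Real.sqrt (δ^2 - ω^2) := by
  have hρ : 0 < Real.arccos |⟪u,v⟫| := Real.arccos_pos.2 (abs_inner_lt_one hu hv h1 h2)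
  rw [div_le_iff₀ hρ]
  rw [width_eq hω hδ u hu, width_eq hω hδ v hv]
  calc _ ≤ Real.sqrt (δ^2 - ω^2) * abs (Real.arccos |u 0| - Real.arccos |v 0|) :=
        G_lip hω hδ (Real.arccos_nonneg _) (Real.arccos_nonneg _)
    _ ≤ Real.sqrt (δ^2 - ω^2) * Real.arccos |⟪u,v⟫| :=
        mul_le_mul_of_nonneg_left (abs_arccos_sub hu hv) (Real.sqrt_nonneg _)

lemma sSup_ratio (hn : 2 ≤ n) :
    sSup {q : ℝ | ∃ u v : EuclideanSpace ℝ (Fin n), ‖u‖ = 1 ∧ ‖v‖ = 1 ∧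
        u ≠ v ∧ u ≠ -v ∧
        q = |widthFn (slab n δ ω) u - widthFn (slab n δ ω) v| / Real.arccos |⟪u,v⟫|} =
      Real.sqrt (δ^2 - ω^2) := by
  have hδ0 : (0:ℝ) < δ := lt_of_lt_of_le hω hδ
  set D := Real.sqrt (δ^2 - ω^2) with hD
  set S := {q : ℝ | ∃ u v : EuclideanSpace ℝ (Fin n), ‖u‖ = 1 ∧ ‖v‖ = 1 ∧
        u ≠ v ∧ u ≠ -v ∧
        q = |widthFn (slab n δ ω) u - widthFn (slab n δ ω) v| / Real.arccos |⟪u,v⟫|} with hS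
  set i1 : Fin n := ⟨1, by omega⟩ with hi1
  have hi10 : (0 : Fin n) ≠ i1 := by
    intro h
    have := congrArg Fin.val h
    simp [hi1] at this
  set E1 : EuclideanSpace ℝ (Fin n) := EuclideanSpace.single i1 (1:ℝ) with hE1
  have hE1norm : ‖E1‖ = 1 := by simp [hE1, EuclideanSpace.norm_single]
  have hE1_0 : E1 0 = 0 := by
    rw [hE1, EuclideanSpace.single_apply]; simp [hi10]
  have hE0_i1 : (E0 n) i1 = 0 := by
    rw [E0, EuclideanSpace.single_apply]; simp [Ne.symm hi10]
  have hE1_i1 : E1 i1 = 1 := by rw [hE1, EuclideanSpace.single_apply]; simp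
  have hinner01 : ⟪E0 n, E1⟫ = 0 := by rw [inner_E0', hE1_0]
  -- a default element of S
  have hmem0 : (|widthFn (slab n δ ω) (E0 n) - widthFn (slab n δ ω) E1| /
      Real.arccos |⟪E0 n, E1⟫|) ∈ S := by
    refine ⟨E0 n, E1, norm_E0, hE1norm, ?_, ?_, rfl⟩
    · intro h
      have := congrArg (fun z : EuclideanSpace ℝ (Fin n) => z 0) h
      simp only [E0_apply_zero, hE1_0] at this
      norm_num at this
    · intro h
      have h5 : (E0 n) 0 = -(E1 0) := congrArg (fun z : EuclideanSpace ℝ (Fin n) => z 0) h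
      rw [E0_apply_zero, hE1_0] at h5
      norm_num at h5
  have hSne : S.Nonempty := ⟨_, hmem0⟩
  have hub : ∀ q ∈ S, q ≤ D := by
    rintro q ⟨u, v, hu, hv, h1, h2, rfl⟩
    exact ratio_le hω hδ hu hv h1 h2
  have hbdd : BddAbove S := ⟨D, hub⟩
  have hq0 : ∀ q ∈ S, 0 ≤ q := by
    rintro q ⟨u, v, hu, hv, h1, h2, rfl⟩
    exact div_nonneg (abs_nonneg _) (Real.arccos_nonneg _)
  apply le_antisymm (csSup_le hSne hub)
  -- lower bound
  rcases eq_or_lt_of_le hδ with heq | hlt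
  · -- ω = δ : D = 0
    have hD0 : D = 0 := by rw [hD, ← heq]; simp
    rw [hD0]
    exact le_trans (hq0 _ hmem0) (le_csSup hbdd hmem0)
  · -- ω < δ
    have hDpos : 0 < D := Real.sqrt_pos.2 (by nlinarith)
    set φ₀ := Real.arccos (ω/δ) with hφ₀
    have hφ₀pos : 0 < φ₀ := Real.arccos_pos.2 (by rw [div_lt_one hδ0]; exact hlt)
    have hφ₀le : φ₀ ≤ π/2 := phi0_le_pi_div_two hω hδ
    set f : ℝ → ℝ := fun x => δ * Real.cos (φ₀ - x) with hf
    have hderiv : HasDerivAt f D 0 := by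
      have h1 : HasDerivAt (fun x : ℝ => φ₀ - x) (-1) 0 := (hasDerivAt_id 0).const_sub φ₀
      have h2 := h1.cos
      have h3 := h2.const_mul δ
      have heq2 : δ * (-Real.sin (φ₀ - 0) * -1) = D := by
        rw [sub_zero, hφ₀, sin_phi0 hω hδ, ← hD]
        field_simp
      rwa [heq2] at h3
    have hslope : Tendsto (slope f 0) (𝓝[>] 0) (𝓝 D) := by
      have := hasDerivAt_iff_tendsto_slope.mp hderiv
      exact this.mono_left (nhdsWithin_mono 0 (fun x hx => ne_of_gt hx))
    apply le_of_forall_pos_le_add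
    intro ε hε
    have hev1 : ∀ᶠ x in 𝓝[>] (0:ℝ), D - ε < slope f 0 x :=
      hslope.eventually (lt_mem_nhds (by linarith))
    have hev2 : Set.Ioc (0:ℝ) φ₀ ∈ 𝓝[>] (0:ℝ) := Ioc_mem_nhdsGT hφ₀pos
    obtain ⟨φ, hφ1, hφ2⟩ := (hev1.and (eventually_of_mem hev2 (fun x hx => hx))).exists
    obtain ⟨hφpos, hφle⟩ := hφ2
    -- build v
    set v : EuclideanSpace ℝ (Fin n) := Real.cos φ • E0 n + Real.sin φ • E1 with hv
    have hφpi : φ < π := lt_of_le_of_lt hφle (lt_of_le_of_lt hφ₀le (by linarith [Real.pi_pos]))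
    have hsinφ : 0 < Real.sin φ := Real.sin_pos_of_pos_of_lt_pi hφpos hφpi
    have hcosφ : 0 ≤ Real.cos φ := by
      apply Real.cos_nonneg_of_mem_Icc
      constructor <;> [linarith; linarith]
    have hv0 : v 0 = Real.cos φ := by
      have : v 0 = Real.cos φ * (E0 n) 0 + Real.sin φ * E1 0 := rfl
      rw [this, E0_apply_zero, hE1_0]; ring
    have hvi1 : v i1 = Real.sin φ := by
      have : v i1 = Real.cos φ * (E0 n) i1 + Real.sin φ * E1 i1 := rfl
      rw [this, hE0_i1, hE1_i1]; ring
    have hvnorm : ‖v‖ = 1 := by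
      have hsq : ‖v‖^2 = 1 := by
        rw [hv, norm_add_sq_real, real_inner_smul_left, real_inner_smul_right, hinner01,
          norm_smul, norm_smul, norm_E0 (n := n), hE1norm]
        simp only [Real.norm_eq_abs, mul_pow, sq_abs, mul_one, one_pow]
        nlinarith [Real.sin_sq_add_cos_sq φ]
      rw [← Real.sqrt_sq (norm_nonneg v), hsq, Real.sqrt_one]
    have hne1 : E0 n ≠ v := by
      intro h
      have := congrArg (fun z : EuclideanSpace ℝ (Fin n) => z i1) h
      simp only [hE0_i1, hvi1] at this
      linarith
    have hne2 : E0 n ≠ -v := by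
      intro h
      have h5 : (E0 n) i1 = -(v i1) := congrArg (fun z : EuclideanSpace ℝ (Fin n) => z i1) h
      rw [hE0_i1, hvi1] at h5
      linarith
    have hinner : ⟪E0 n, v⟫ = Real.cos φ := by rw [inner_E0', hv0]
    have harccos : Real.arccos |⟪E0 n, v⟫| = φ := by
      rw [hinner, abs_of_nonneg hcosφ, Real.arccos_cos hφpos.le hφpi.le]
    have hwidthv : widthFn (slab n δ ω) v = f φ := by
      rw [width_eq hω hδ v hvnorm, hv0, abs_of_nonneg hcosφ,
        Real.arccos_cos hφpos.le hφpi.le, min_eq_left hφle]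
    have hwidthu : widthFn (slab n δ ω) (E0 n) = ω := width_E0 hω hδ
    have hge : ω ≤ f φ := by rw [← hwidthv]; exact width_ge hω hδ v hvnorm
    have hf0 : f 0 = ω := by
      rw [hf]; simp only [sub_zero]
      rw [hφ₀, cos_phi0 hω hδ]; field_simp
    have hqmem : (|widthFn (slab n δ ω) (E0 n) - widthFn (slab n δ ω) v| /
        Real.arccos |⟪E0 n, v⟫|) ∈ S :=
      ⟨E0 n, v, norm_E0, hvnorm, hne1, hne2, rfl⟩
    have hqval : |widthFn (slab n δ ω) (E0 n) - widthFn (slab n δ ω) v| /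
        Real.arccos |⟪E0 n, v⟫| = slope f 0 φ := by
      rw [hwidthu, hwidthv, harccos, slope_def_field, hf0]
      rw [abs_of_nonpos (by linarith)]
      rw [sub_zero]
      ring
    have hle : slope f 0 φ ≤ sSup S := by
      rw [← hqval]; exact le_csSup hbdd hqmem
    linarith

end Body

end WidthOpt

theorem width_lipschitz_constant_optimal {n : ℕ} (hn : 2 ≤ n) (δ ω : ℝ)
    (hω : 0 < ω) (hδ : ω ≤ δ) :
    ∃ K : Set (EuclideanSpace ℝ (Fin n)),
      IsCompact K ∧ Convex ℝ K ∧ (interior K).Nonempty ∧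
      Metric.diam K = δ ∧
      (⨅ u : sphere (0 : EuclideanSpace ℝ (Fin n)) 1, widthFn K u) = ω ∧
      sSup {q : ℝ | ∃ u v : EuclideanSpace ℝ (Fin n), ‖u‖ = 1 ∧ ‖v‖ = 1 ∧
          u ≠ v ∧ u ≠ -v ∧ q = |widthFn K u - widthFn K v| / rho u v} =
        Real.sqrt (δ ^ 2 - ω ^ 2) := by
  haveI : NeZero n := ⟨by omega⟩
  refine ⟨WidthOpt.slab n δ ω, WidthOpt.isCompact_slab hω hδ, WidthOpt.convex_slab,
    ⟨0, WidthOpt.zero_mem_interior hω hδ⟩, WidthOpt.diam_slab hω hδ hn,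
    WidthOpt.iInf_width hω hδ, ?_⟩
  have h := WidthOpt.sSup_ratio hω hδ hn
  simp only [rho]
  exact h
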